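/- For every integer n ≥ 1, the function z ↦ z/(1−(1−z)^n) is monotone increasing on (0,1]: for all real z_1, z_2 with 0 < z_1 ≤ z_2 ≤ 1, one has z_1/(1−(1−z_1)^n) ≤ z_2/(1−(1−z_2)^n). -/

import Mathlib

lemma geom_key (n : ℕ) (z : ℝ) :
    1 - (1 - z) ^ n = z * ∑ k ∈ Finset.range n, (1 - z) ^ k := by
  have h := geom_sum_mul (1 - z) n
  nlinarith [h]

lemma sum_pos_key (n : ℕ) (hn : 1 ≤ n) (z : ℝ) (hz : z ≤ 1) :
    0 < ∑ k ∈ Finset.range n, (1 - z) ^ k := by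
  have h0 : (0:ℝ) ≤ 1 - z := by linarith
  calc (0:ℝ) < (1-z)^0 := by norm_num
    _ ≤ ∑ k ∈ Finset.range n, (1 - z) ^ k := by
        apply Finset.single_le_sum (f := fun k => (1-z)^k)
        · intro i _; positivity
        · exact Finset.mem_range.mpr hn

/-- Lemma 4: the function `z ↦ z / (1 - (1 - z)^n)` is monotone increasing on `(0, 1]`. -/
theorem stmt_6 (n : ℕ) (hn : 1 ≤ n) (z₁ z₂ : ℝ)
    (h1 : 0 < z₁) (h12 : z₁ ≤ z₂) (h2 : z₂ ≤ 1) :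
    z₁ / (1 - (1 - z₁) ^ n) ≤ z₂ / (1 - (1 - z₂) ^ n) := by
  have hs1 := sum_pos_key n hn z₁ (le_trans h12 h2)
  have hs2 := sum_pos_key n hn z₂ h2
  rw [geom_key, geom_key, div_mul_eq_div_div, div_mul_eq_div_div,
    div_self (ne_of_gt h1), div_self (by linarith : z₂ ≠ 0)]
  apply one_div_le_one_div_of_le hs2
  apply Finset.sum_le_sum
  intro i _
  exact pow_le_pow_left₀ (by linarith) (by linarith) i
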